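/- Let h ∈ (0, 1/2], and define μ₁ = √((1−2h)/(2(1−h))) + i/√(2(1−h)), μ₂ = conjugate of μ₁, and η₁ = √((1+2h)/(2(1+h))) + i/√(2(1+h)). Then there exist no real numbers R₁ > 0 and R₂ > 0 with R₁ + R₂ = 1 such that (1−h)·(R₁·μ₁² + R₂·μ₂²) + (1+h)·η₁² = 0. -/

import Mathlib

/-- nonexistence in the case `(m, m') = (2, 1)`: the balancing
condition with `R'₁ = 1` has no solution with positive weights `R₁, R₂`. -/
theorem stmt12 (h : ℝ) (hh : h ∈ Set.Ioc (0 : ℝ) (1 / 2))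
    (μ₁ μ₂ η₁ : ℂ)
    (hμ₁ : μ₁ = (Real.sqrt ((1 - 2 * h) / (2 * (1 - h))) : ℝ)
        + Complex.I * (1 / Real.sqrt (2 * (1 - h)) : ℝ))
    (hμ₂ : μ₂ = starRingEnd ℂ μ₁)
    (hη₁ : η₁ = (Real.sqrt ((1 + 2 * h) / (2 * (1 + h))) : ℝ)
        + Complex.I * (1 / Real.sqrt (2 * (1 + h)) : ℝ)) :
    ¬ ∃ R₁ R₂ : ℝ, 0 < R₁ ∧ 0 < R₂ ∧ R₁ + R₂ = 1 ∧
      ((1 - h : ℝ) : ℂ) * ((R₁ : ℂ) * μ₁ ^ 2 + (R₂ : ℂ) * μ₂ ^ 2)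
        + ((1 + h : ℝ) : ℂ) * η₁ ^ 2 = 0 := by
  obtain ⟨hh0, hh2⟩ := hh
  rintro ⟨R₁, R₂, hR1, hR2, hsum, heq⟩
  subst hμ₁ hμ₂ hη₁
  have h1 : (0:ℝ) < 2 * (1 - h) := by linarith
  have h2 : (0:ℝ) < 2 * (1 + h) := by linarith
  have h3 : (0:ℝ) ≤ 1 - 2 * h := by linarith
  have h4 : (0:ℝ) ≤ 1 + 2 * h := by linarith
  set A := Real.sqrt ((1 - 2 * h) / (2 * (1 - h))) with hA
  set B := 1 / Real.sqrt (2 * (1 - h)) with hB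
  set C := Real.sqrt ((1 + 2 * h) / (2 * (1 + h))) with hC
  set D := 1 / Real.sqrt (2 * (1 + h)) with hD
  have him := congrArg Complex.im heq
  simp only [Complex.add_im, Complex.mul_im, Complex.mul_re, Complex.ofReal_re,
    Complex.ofReal_im, Complex.I_re, Complex.I_im, Complex.conj_re, Complex.conj_im,
    pow_two, Complex.add_re, Complex.zero_im, map_add, map_mul, Complex.conj_I,
    Complex.conj_ofReal, Complex.neg_im, Complex.neg_re] at him
  have ka : A * B = Real.sqrt (1 - 2*h) / (2*(1-h)) := by
    rw [hA, hB, Real.sqrt_div h3, div_mul_div_comm, mul_one,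
      Real.mul_self_sqrt h1.le]
  have kb : C * D = Real.sqrt (1 + 2*h) / (2*(1+h)) := by
    rw [hC, hD, Real.sqrt_div h4, div_mul_div_comm, mul_one,
      Real.mul_self_sqrt h2.le]
  have key : (R₁ - R₂) * Real.sqrt (1 - 2*h) + Real.sqrt (1 + 2*h) = 0 := by
    have hne1 : (0:ℝ) < 1 - h := by linarith
    have hne2 : (0:ℝ) < 1 + h := by linarith
    have him' : (1 - h) * (R₁ * (2 * (A*B)) + R₂ * (-(2 * (A*B))))
        + (1 + h) * (2 * (C*D)) = 0 := by ring_nf; ring_nf at him; linarith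
    rw [ka, kb] at him'
    field_simp at him'
    have hc : (4*(1-h)*(1+h) : ℝ) ≠ 0 := by positivity
    refine mul_left_cancel₀ hc ?_
    rw [mul_zero]
    rw [mul_comm h 2] at him'
    linear_combination (4*(1-h)*(1+h)) * him'
  have hs : (0:ℝ) ≤ Real.sqrt (1 - 2*h) := Real.sqrt_nonneg _
  have hst : Real.sqrt (1 - 2*h) < Real.sqrt (1 + 2*h) :=
    Real.sqrt_lt_sqrt h3 (by linarith)
  nlinarith [mul_nonneg (show (0:ℝ) ≤ 1 - (R₂ - R₁) by linarith) hs]
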